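/- Let G be an abelian group, S : ℕ → ℕ, s(n) = ∏_{i=0}^n S(i), and let G' be the direct limit of the sequence G →(·s(0)) G →(·s(1)) ⋯ with η : G → G' the canonical map from the 0-th stage. Then for every group H that is uniquely S(k)-divisible for all k, precomposition with η gives a bijection Hom(G', H) ≅ Hom(G, H). -/

import Mathlib

/-- Multiplication by a natural number `c` as an additive homomorphism. -/
def mulBy (G : Type*) [AddCommGroup G] (c : ℕ) : G →+ G :=
  AddMonoidHom.mk' (fun g => c • g) fun a b => smul_add c a b

/-- `sProd S n = ∏_{i=0}^{n} S i`. -/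
def sProd (S : ℕ → ℕ) (n : ℕ) : ℕ := ∏ i ∈ Finset.range (n + 1), S i

/-- The transition maps of the sequential diagram `G → G → G → ⋯` whose `n`-th map is
multiplication by `s n`; the composite from stage `i` to stage `j` is multiplication by
`∏_{t=i}^{j-1} s t`. -/
def transMap (G : Type*) [AddCommGroup G] (s : ℕ → ℕ) : ∀ i j : ℕ, i ≤ j → (G →+ G) :=
  fun i j _ => mulBy G (∏ t ∈ Finset.Ico i j, s t)

instance transMap.directedSystem (G : Type*) [AddCommGroup G] (s : ℕ → ℕ) :
    DirectedSystem (fun _ : ℕ => G) fun i j h => transMap G s i j h where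
  map_self i x := by simp [transMap, mulBy]
  map_map {k j i} hij hjk x := by
    simp only [transMap, mulBy, AddMonoidHom.mk'_apply, smul_smul]
    rw [mul_comm, Finset.prod_Ico_consecutive _ hij hjk]

section Aux

variable {H : Type*} [Group H]

lemma pow_bij_mul {a b : ℕ} (ha : Function.Bijective fun h : H => h ^ a)
    (hb : Function.Bijective fun h : H => h ^ b) :
    Function.Bijective fun h : H => h ^ (a * b) := by
  have : (fun h : H => h ^ (a * b)) = (fun h : H => h ^ b) ∘ fun h : H => h ^ a := by
    funext h; simp [pow_mul]
  rw [this]; exact hb.comp ha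

lemma pow_bij_prod {ι : Type*} (F : Finset ι) (f : ι → ℕ)
    (hf : ∀ i ∈ F, Function.Bijective fun h : H => h ^ f i) :
    Function.Bijective fun h : H => h ^ (∏ i ∈ F, f i) :=
  Finset.prod_induction f (fun e => Function.Bijective fun h : H => h ^ e)
    (fun _ _ => pow_bij_mul) (by simp only [pow_one]; exact Function.bijective_id) hf

lemma roots_commute {e : ℕ} (he : Function.Injective fun h : H => h ^ e)
    {x y : H} (h : Commute (x ^ e) (y ^ e)) : Commute x y := by
  have h1 : y ^ e * x * (y ^ e)⁻¹ = x := by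
    apply he
    show (y ^ e * x * (y ^ e)⁻¹) ^ e = x ^ e
    rw [conj_pow, h.symm.eq]; group
  have h1' : Commute (y ^ e) x := by
    rw [Commute, SemiconjBy]
    calc y ^ e * x = (y ^ e * x * (y ^ e)⁻¹) * y ^ e := by group
    _ = x * y ^ e := by rw [h1]
  -- now x commutes with y ^ e, so conjugating x^e by y fixes it... do symmetric step
  have h2 : x ^ e * y * (x ^ e)⁻¹ = y := by
    apply he
    show (x ^ e * y * (x ^ e)⁻¹) ^ e = y ^ e
    rw [conj_pow, h.eq]; group
  have h2' : Commute (x ^ e) y := by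
    rw [Commute, SemiconjBy]
    calc x ^ e * y = (x ^ e * y * (x ^ e)⁻¹) * x ^ e := by group
    _ = y * x ^ e := by rw [h2]
  -- final
  have : y * x * y⁻¹ = x := by
    apply he
    show (y * x * y⁻¹) ^ e = x ^ e
    rw [conj_pow, h2'.symm.eq]; group
  symm
  rw [Commute, SemiconjBy]
  calc y * x = (y * x * y⁻¹) * y := by group
  _ = x * y := by rw [this]

end Aux

/-- If `H` is a group which is uniquely `S k`-divisible for every `k`, then precomposition
with the canonical map `η : G → G'` from the `0`-th stage into the direct limit
`G' = colim (G →(·s 0) G →(·s 1) ⋯)` is a bijection `Hom(G', H) ≅ Hom(G, H)`. -/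
theorem stmt4 (G : Type*) [AddCommGroup G] (S : ℕ → ℕ) (H : Type*) [Group H]
    (hH : ∀ k : ℕ, Function.Bijective fun h : H => h ^ S k) :
    Function.Bijective
      fun f : AddCommGroup.DirectLimit (fun _ : ℕ => G) (transMap G (sProd S)) →+ Additive H =>
        f.comp (AddCommGroup.DirectLimit.of (fun _ : ℕ => G) (transMap G (sProd S)) 0) := by
  classical
  set s := sProd S with hs
  set c : ℕ → ℕ := fun n => ∏ t ∈ Finset.range n, s t with hc
  have hsbij : ∀ n, Function.Bijective fun h : H => h ^ s n := fun n =>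
    pow_bij_prod _ _ fun i _ => hH i
  have hcbij : ∀ n, Function.Bijective fun h : H => h ^ c n := fun n =>
    pow_bij_prod _ _ fun i _ => hsbij i
  have hceq : ∀ n, c n = ∏ t ∈ Finset.Ico 0 n, s t := by
    intro n; rw [hc, ← Finset.range_eq_Ico]
  have hof : ∀ (n : ℕ) (g : G),
      AddCommGroup.DirectLimit.of (fun _ : ℕ => G) (transMap G s) n ((c n) • g)
        = AddCommGroup.DirectLimit.of (fun _ : ℕ => G) (transMap G s) 0 g := by
    intro n g
    have h := AddCommGroup.DirectLimit.of_f (G := fun _ : ℕ => G) (f := transMap G s)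
      (i := 0) (j := n) (Nat.zero_le n) g
    rw [hceq n]
    simpa only [transMap, mulBy, AddMonoidHom.mk'_apply] using h
  constructor
  · -- injectivity
    intro f₁ f₂ hf
    ext x
    induction x using AddCommGroup.DirectLimit.induction_on with
    | ih n g =>
      have h0 : f₁ (AddCommGroup.DirectLimit.of (fun _ : ℕ => G) (transMap G s) 0 g)
          = f₂ (AddCommGroup.DirectLimit.of (fun _ : ℕ => G) (transMap G s) 0 g) :=
        congrFun (congrArg DFunLike.coe hf) g
      rw [← hof n g] at h0
      simp only [map_nsmul] at h0
      have hinj : Function.Injective fun x : Additive H => (c n) • x := by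
        intro a b hab
        have : a.toMul ^ (c n) = b.toMul ^ (c n) := by
          simpa [toMul_nsmul] using congrArg Additive.toMul hab
        exact (hcbij n).1 this
      exact hinj h0
  · -- surjectivity
    intro φ
    set p : G → H := fun g => (φ g).toMul with hp
    have hp_add : ∀ a b, p (a + b) = p a * p b := by
      intro a b; simp [hp, map_add]
    have hp_pow : ∀ (g : G) (e : ℕ), p g ^ e = p (e • g) := by
      intro g e; simp [hp, map_nsmul, toMul_nsmul]
    have hp_comm : ∀ a b, Commute (p a) (p b) := by
      intro a b
      rw [Commute, SemiconjBy, ← hp_add, ← hp_add, add_comm]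
    -- the exponent monoid
    set E : Submonoid ℕ := Submonoid.closure (Set.range S) with hE
    have hEbij : ∀ e ∈ E, Function.Bijective fun h : H => h ^ e := by
      intro e he
      induction he using Submonoid.closure_induction with
      | mem x hx => obtain ⟨k, rfl⟩ := hx; exact hH k
      | one => simp only [pow_one]; exact Function.bijective_id
      | mul a b _ _ ha hb => exact pow_bij_mul ha hb
    have hsE : ∀ n, s n ∈ E := fun n =>
      prod_mem fun i _ => Submonoid.subset_closure ⟨i, rfl⟩
    have hcE : ∀ n, c n ∈ E := fun n => prod_mem fun i _ => hsE i
    -- the subgroup of compatible roots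
    set Kc : Set H := {h | ∃ e ∈ E, ∃ g : G, h ^ e = p g} with hKc
    have hKcomm : ∀ x ∈ Kc, ∀ y ∈ Kc, Commute x y := by
      rintro x ⟨e₁, he₁, g₁, hg₁⟩ y ⟨e₂, he₂, g₂, hg₂⟩
      apply roots_commute (e := e₁ * e₂) (hEbij _ (mul_mem he₁ he₂)).1
      have hx : x ^ (e₁ * e₂) = p ((e₂ : ℕ) • g₁) := by
        rw [pow_mul, hg₁, hp_pow]
      have hy : y ^ (e₁ * e₂) = p ((e₁ : ℕ) • g₂) := by
        rw [mul_comm, pow_mul, hg₂, hp_pow]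
      rw [hx, hy]; exact hp_comm _ _
    set K : Subgroup H :=
      { carrier := Kc
        one_mem' := ⟨1, one_mem E, 0, by simp [hp]⟩
        mul_mem' := by
          rintro x y hx hy
          obtain ⟨e₁, he₁, g₁, hg₁⟩ := hx
          obtain ⟨e₂, he₂, g₂, hg₂⟩ := hy
          refine ⟨e₁ * e₂, mul_mem he₁ he₂, e₂ • g₁ + e₁ • g₂, ?_⟩
          have hcomm : Commute x y := hKcomm x ⟨e₁, he₁, g₁, hg₁⟩ y ⟨e₂, he₂, g₂, hg₂⟩
          rw [hcomm.mul_pow, hp_add, pow_mul, hg₁, hp_pow, mul_comm e₁ e₂, pow_mul, hg₂, hp_pow]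
        inv_mem' := by
          rintro x ⟨e, he, g, hg⟩
          exact ⟨e, he, -g, by rw [inv_pow, hg]; simp [hp]⟩ } with hK
    letI : CommGroup ↥K :=
      { (inferInstance : Group ↥K) with
        mul_comm := fun a b => Subtype.ext ((hKcomm a a.2 b b.2).eq) }
    -- roots
    set r : ∀ n : ℕ, H → H := fun n => (Equiv.ofBijective _ (hcbij n)).symm with hr
    have hr_pow : ∀ (n : ℕ) (h : H), r n h ^ c n = h := fun n h =>
      (Equiv.ofBijective _ (hcbij n)).apply_symm_apply h
    have hrK : ∀ (n : ℕ) (g : G), r n (p g) ∈ K := fun n g =>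
      ⟨c n, hcE n, g, hr_pow n (p g)⟩
    set ψ : ∀ n : ℕ, G →+ Additive ↥K := fun n =>
      AddMonoidHom.mk' (fun g => Additive.ofMul (⟨r n (p g), hrK n g⟩ : ↥K)) (by
        intro a b
        apply congrArg Additive.ofMul
        apply Subtype.ext
        show r n (p (a + b)) = r n (p a) * r n (p b)
        apply (hcbij n).1
        show r n (p (a+b)) ^ c n = (r n (p a) * r n (p b)) ^ c n
        have hcomm : Commute (r n (p a)) (r n (p b)) :=
          hKcomm _ (hrK n a) _ (hrK n b)
        rw [hcomm.mul_pow, hr_pow, hr_pow, hr_pow, hp_add]) with hψ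
    have hcompat : ∀ (i j : ℕ) (hij : i ≤ j) (g : G),
        ψ j (transMap G s i j hij g) = ψ i g := by
      intro i j hij g
      apply congrArg Additive.ofMul
      apply Subtype.ext
      show r j (p ((∏ t ∈ Finset.Ico i j, s t) • g)) = r i (p g)
      apply (hcbij j).1
      show _ ^ c j = _ ^ c j
      have hcj : c j = c i * ∏ t ∈ Finset.Ico i j, s t := by
        simp only [hc, Finset.range_eq_Ico]
        exact (Finset.prod_Ico_consecutive _ (Nat.zero_le i) hij).symm
      rw [hr_pow, hcj, pow_mul, hr_pow, hp_pow]
    refine ⟨(MonoidHom.toAdditive K.subtype).comp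
      (AddCommGroup.DirectLimit.lift _ _ _ ψ hcompat), ?_⟩
    ext g
    show (MonoidHom.toAdditive K.subtype)
      (AddCommGroup.DirectLimit.lift _ _ _ ψ hcompat
        (AddCommGroup.DirectLimit.of (fun _ : ℕ => G) (transMap G s) 0 g)) = φ g
    rw [AddCommGroup.DirectLimit.lift_of]
    show Additive.ofMul ((r 0 (p g) : H)) = φ g
    have : r 0 (p g) = p g := by
      have := hr_pow 0 (p g)
      simpa [hc] using this
    rw [this]
    simp [hp]
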